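/- Let G be a (q+1)-regular graph, ψ an eigenfunction of H_𝐆 (Schrödinger operator with symmetric potential U and Kirchhoff conditions with coupling α) with eigenvalue λ, and let ψ̊ be its restriction to vertices. Then A_G ψ̊ = w(λ) ψ̊, where w(λ) = (q+1)c(λ) + α s(λ). -/

import Mathlib

open Set

/-- `deriv f` is `ContDiff 1` when `f` is `ContDiff 2`. -/
private lemma contDiff_deriv_of_two {𝕜 : Type*} [RCLike 𝕜] {f : ℝ → 𝕜}
    (hf : ContDiff ℝ 2 f) : ContDiff ℝ 1 (deriv f) := by
  have h2 : ((2 : ℕ) : WithTop ℕ∞) = (1 : WithTop ℕ∞) + 1 := by norm_num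
  have := (contDiff_succ_iff_deriv (n := 1) (f := f)).mp (by rw [← h2]; exact_mod_cast hf)
  exact this.2.2

/-- Constancy of the Wronskian for two solutions of the same second order ODE. -/
private lemma wronskian_const {𝕜 : Type*} [RCLike 𝕜] (L : ℝ) (hL : 0 < L) (P : ℝ → 𝕜)
    (f g : ℝ → 𝕜) (hf : ContDiff ℝ 2 f) (hg : ContDiff ℝ 2 g)
    (hfODE : ∀ x ∈ Icc (0:ℝ) L, deriv (deriv f) x = P x * f x)
    (hgODE : ∀ x ∈ Icc (0:ℝ) L, deriv (deriv g) x = P x * g x) :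
    deriv f L * g L - f L * deriv g L = deriv f 0 * g 0 - f 0 * deriv g 0 := by
  set W : ℝ → 𝕜 := fun x => deriv f x * g x - f x * deriv g x with hW
  have hf1 : ContDiff ℝ 1 (deriv f) := contDiff_deriv_of_two hf
  have hg1 : ContDiff ℝ 1 (deriv g) := contDiff_deriv_of_two hg
  have hfd : Differentiable ℝ f := hf.differentiable (by norm_num)
  have hgd : Differentiable ℝ g := hg.differentiable (by norm_num)
  have hfd' : Differentiable ℝ (deriv f) := hf1.differentiable (by norm_num)
  have hgd' : Differentiable ℝ (deriv g) := hg1.differentiable (by norm_num)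
  have hWdiff : Differentiable ℝ W := ((hfd'.mul hgd).sub (hfd.mul hgd'))
  have key : ∀ x ∈ Icc (0:ℝ) L, W x = W 0 := by
    apply constant_of_derivWithin_zero hWdiff.differentiableOn
    intro x hx
    have hx' : x ∈ Icc (0:ℝ) L := Ico_subset_Icc_self hx
    have h1 : HasDerivAt (fun y => deriv f y * g y)
        (deriv (deriv f) x * g x + deriv f x * deriv g x) x :=
      ((hfd' x).hasDerivAt).mul ((hgd x).hasDerivAt)
    have h2 : HasDerivAt (fun y => f y * deriv g y)
        (deriv f x * deriv g x + f x * deriv (deriv g) x) x :=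
      ((hfd x).hasDerivAt).mul ((hgd' x).hasDerivAt)
    have hWd : HasDerivAt W 0 x := by
      have h3 := h1.sub h2
      refine h3.congr_deriv ?_
      rw [hfODE x hx', hgODE x hx']
      ring
    rw [hWd.hasDerivWithinAt.derivWithin (uniqueDiffOn_Icc hL x hx')]
  have := key L (by constructor <;> [exact le_of_lt hL; exact le_rfl])
  simpa [hW] using this

theorem vertex_restriction_eigenfunction
    (V : Type*) [Fintype V] [DecidableEq V]
    (G : SimpleGraph V) [DecidableRel G.Adj]
    (q : ℕ) (hreg : G.IsRegularOfDegree (q + 1))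
    (L : ℝ) (hL : 0 < L) (U : ℝ → ℝ)
    (hUsym : ∀ x ∈ Icc (0:ℝ) L, U (L - x) = U x)
    (α lam : ℝ)
    -- fundamental solutions C, S of -ψ'' + Uψ = λψ on [0,L]
    (C S : ℝ → ℝ) (hC : ContDiff ℝ 2 C) (hS : ContDiff ℝ 2 S)
    (hCODE : ∀ x ∈ Icc (0:ℝ) L, deriv (deriv C) x = (U x - lam) * C x)
    (hSODE : ∀ x ∈ Icc (0:ℝ) L, deriv (deriv S) x = (U x - lam) * S x)
    (hC0 : C 0 = 1) (hC0' : deriv C 0 = 0) (hS0 : S 0 = 0) (hS0' : deriv S 0 = 1)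
    (hs : S L ≠ 0)
    -- the eigenfunction: ψ u v is the restriction to the edge (u,v), parametrized from u to v
    (ψ : V → V → ℝ → ℂ) (ψ0 : V → ℂ)
    (hsmooth : ∀ u v, G.Adj u v → ContDiff ℝ 2 (ψ u v))
    (hODE : ∀ u v, G.Adj u v → ∀ x ∈ Icc (0:ℝ) L,
      deriv (deriv (ψ u v)) x = (((U x : ℝ) : ℂ) - (lam : ℂ)) * ψ u v x)
    (hrev : ∀ u v, G.Adj u v → ∀ x, ψ v u x = ψ u v (L - x))
    (hcont0 : ∀ u v, G.Adj u v → ψ u v 0 = ψ0 u)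
    (hcontL : ∀ u v, G.Adj u v → ψ u v L = ψ0 v)
    (hkirch : ∀ v, ∑ u ∈ G.neighborFinset v, deriv (ψ v u) 0 = (α : ℂ) * ψ0 v) :
    ∀ v, ∑ u ∈ G.neighborFinset v, ψ0 u
      = ((((q : ℝ) + 1) * C L + α * S L : ℝ) : ℂ) * ψ0 v := by
  have hSd : Differentiable ℝ S := hS.differentiable (by norm_num)
  have hSd' : Differentiable ℝ (deriv S) := (contDiff_deriv_of_two hS).differentiable (by norm_num)
  -- Step 1: symmetry gives `deriv S L = C L`.
  set f : ℝ → ℝ := fun x => S (L - x) with hfdef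
  have hinner : ∀ x : ℝ, HasDerivAt (fun y : ℝ => L - y) (-1) x := fun x => by
    simpa using (hasDerivAt_id x).const_sub L
  have hfc : ContDiff ℝ 2 f := hS.comp (contDiff_const.sub contDiff_id)
  have hf' : deriv f = fun x => -(deriv S (L - x)) := by
    funext x
    have h := (hSd (L - x)).hasDerivAt.comp x (hinner x)
    exact (by simpa using h.deriv : deriv (S ∘ HSub.hSub L) x = -deriv S (L - x))
  have hf'' : ∀ x ∈ Icc (0:ℝ) L, deriv (deriv f) x = (U x - lam) * f x := by
    intro x hx
    have hx' : L - x ∈ Icc (0:ℝ) L := by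
      constructor <;> [linarith [hx.2]; linarith [hx.1]]
    rw [hf']
    have h : HasDerivAt (fun y => -(deriv S (L - y))) (deriv (deriv S) (L - x)) x := by
      have := ((hSd' (L - x)).hasDerivAt.comp x (hinner x)).neg
      exact this.congr_deriv (by simp)
    rw [h.deriv, hSODE (L - x) hx', hUsym x hx]
  have hwr := wronskian_const L hL (fun x => U x - lam) f C hfc hC hf'' hCODE
  have hfL : f L = 0 := by simp [hfdef, hS0]
  have hf0 : f 0 = S L := by simp [hfdef]
  have hdfL : deriv f L = -1 := by rw [hf']; simp [hS0']
  have hdf0 : deriv f 0 = -(deriv S L) := by rw [hf']; simp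
  have hSL' : deriv S L = C L := by
    rw [hfL, hf0, hdfL, hdf0, hC0, hC0'] at hwr
    simp at hwr
    linarith
  -- Step 2: complexified S
  set Sc : ℝ → ℂ := fun x => (S x : ℂ) with hScdef
  have hScc : ContDiff ℝ 2 Sc := Complex.ofRealCLM.contDiff.comp hS
  have hSc' : deriv Sc = fun x => ((deriv S x : ℝ) : ℂ) := by
    funext x
    exact ((hSd x).hasDerivAt.ofReal_comp).deriv
  have hSc'' : ∀ x ∈ Icc (0:ℝ) L, deriv (deriv Sc) x = (((U x : ℝ) : ℂ) - (lam : ℂ)) * Sc x := by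
    intro x hx
    rw [hSc']
    rw [((hSd' x).hasDerivAt.ofReal_comp).deriv, hSODE x hx]
    push_cast
    ring
  -- Step 3: per-edge identity
  intro v
  have hedge : ∀ u ∈ G.neighborFinset v,
      deriv (ψ v u) 0 * (S L : ℂ) = ψ0 u - ψ0 v * (C L : ℂ) := by
    intro u hu
    have hadj : G.Adj v u := (G.mem_neighborFinset v u).mp hu
    have hadj' : G.Adj u v := hadj.symm
    have hwr2 := wronskian_const L hL (fun x => ((U x : ℝ) : ℂ) - (lam : ℂ))
      (ψ u v) Sc (hsmooth u v hadj') hScc (hODE u v hadj') hSc''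
    simp only [hSc'] at hwr2
    simp only [hScdef] at hwr2
    rw [hcont0 u v hadj', hcontL u v hadj', hS0, hS0', hSL'] at hwr2
    -- hwr2 : deriv (ψ u v) L * S L - ψ0 v * C L = deriv (ψ u v) 0 * 0 - ψ0 u * 1
    have hrevd : deriv (ψ v u) 0 = -(deriv (ψ u v) L) := by
      have hfun : ψ v u = fun x => ψ u v (L - x) := funext (hrev u v hadj')
      rw [hfun]
      have h : HasDerivAt (fun x => ψ u v (L - x)) (-(deriv (ψ u v) L)) 0 := by
        have hin : HasDerivAt (fun y : ℝ => L - y) (-1) (0:ℝ) := by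
          simpa using (hasDerivAt_id (0:ℝ)).const_sub L
        have := HasDerivAt.scomp (0:ℝ)
          (((hsmooth u v hadj').differentiable (by norm_num) (L - 0)).hasDerivAt) hin
        exact this.congr_deriv (by simp)
      simpa using h.deriv
    rw [hrevd]
    push_cast at hwr2 ⊢
    linear_combination -hwr2
  have hsum := Finset.sum_congr rfl hedge
  rw [← Finset.sum_mul, hkirch v] at hsum
  rw [Finset.sum_sub_distrib, Finset.sum_const] at hsum
  have hcard : (G.neighborFinset v).card = q + 1 := by
    rw [G.card_neighborFinset_eq_degree]; exact hreg v
  rw [hcard] at hsum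
  push_cast at hsum ⊢
  linear_combination -hsum
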